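/- If L ⊆ M_n(ℂ) is a transitive subspace spanned by its elements of rank at most r, then span L^{r+1} = M_n(ℂ), i.e. products of r+1 elements of L span all of M_n(ℂ). -/

import Mathlib

open Matrix

namespace TransitiveProd

variable {n : ℕ}

/-- Products of `k` elements of `L`. -/
def P (L : Submodule ℂ (Matrix (Fin n) (Fin n) ℂ)) (k : ℕ) : Set (Matrix (Fin n) (Fin n) ℂ) :=
  {C | ∃ lst : List (Matrix (Fin n) (Fin n) ℂ),
      lst.length = k ∧ (∀ A ∈ lst, A ∈ L) ∧ C = lst.prod}

lemma mem_P_one {L : Submodule ℂ (Matrix (Fin n) (Fin n) ℂ)} {A} (hA : A ∈ L) : A ∈ P L 1 :=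
  ⟨[A], rfl, by simpa using hA, (List.prod_singleton).symm⟩

lemma P_mul_mem {L : Submodule ℂ (Matrix (Fin n) (Fin n) ℂ)} {k D A}
    (hD : D ∈ P L k) (hA : A ∈ L) : D * A ∈ P L (k + 1) := by
  obtain ⟨l, hl, hm, rfl⟩ := hD
  refine ⟨l ++ [A], by simp [hl], ?_, by simp⟩
  intro B hB
  rcases List.mem_append.mp hB with h | h
  · exact hm B h
  · simpa using (by simpa using h : B = A) ▸ hA

lemma trace_vecMulVec_mul (u v : Fin n → ℂ) (D : Matrix (Fin n) (Fin n) ℂ) :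
    (vecMulVec u v * D).trace = v ⬝ᵥ (D *ᵥ u) := by
  simp only [Matrix.trace, Matrix.diag, Matrix.mul_apply, vecMulVec_apply,
    dotProduct, Matrix.mulVec]
  rw [Finset.sum_comm]
  refine Finset.sum_congr rfl fun j _ => ?_
  rw [Finset.mul_sum]
  exact Finset.sum_congr rfl fun i _ => by ring

lemma mul_vecMulVec (A : Matrix (Fin n) (Fin n) ℂ) (u v : Fin n → ℂ) :
    A * vecMulVec u v = vecMulVec (A *ᵥ u) v := by
  ext i j
  simp only [Matrix.mul_apply, vecMulVec_apply, Matrix.mulVec, dotProduct,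
    Finset.sum_mul]
  exact Finset.sum_congr rfl fun k _ => by ring

lemma vecMulVec_zero_left (v : Fin n → ℂ) : vecMulVec (0 : Fin n → ℂ) v = 0 := by
  ext i j; simp [vecMulVec_apply]

/-- If `L` kills a vector, the vector is zero (from transitivity). -/
lemma killed_eq_zero {L : Submodule ℂ (Matrix (Fin n) (Fin n) ℂ)}
    (htrans : ∀ x : Fin n → ℂ, x ≠ 0 → ∀ y : Fin n → ℂ, ∃ A ∈ L, A.mulVec x = y)
    {y : Fin n → ℂ} (h : ∀ A ∈ L, A *ᵥ y = 0) : y = 0 := by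
  by_contra hy
  obtain ⟨A, hA, hAy⟩ := htrans y hy y
  rw [h A hA] at hAy
  exact hy hAy.symm

lemma dot_eq_zero {L : Submodule ℂ (Matrix (Fin n) (Fin n) ℂ)}
    (htrans : ∀ x : Fin n → ℂ, x ≠ 0 → ∀ y : Fin n → ℂ, ∃ A ∈ L, A.mulVec x = y)
    {x y : Fin n → ℂ} (hy : y ≠ 0) (h : ∀ A ∈ L, x ⬝ᵥ (A *ᵥ y) = 0) : x = 0 := by
  obtain ⟨A, hA, hAy⟩ := htrans y hy (star x)
  have h0 := h A hA
  rw [hAy] at h0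
  have h1 : (∑ j, (Complex.normSq (x j) : ℂ)) = 0 := by
    simpa [dotProduct, Pi.star_apply, Complex.mul_conj] using h0
  have h2 : (∑ j, Complex.normSq (x j)) = 0 := by exact_mod_cast h1
  funext j
  have h3 := (Finset.sum_eq_zero_iff_of_nonneg
    (fun i _ => Complex.normSq_nonneg (x i))).mp h2 j (Finset.mem_univ j)
  exact Complex.normSq_eq_zero.mp h3

/-- Rank-one decomposition with independent row vectors. -/
lemma decomp (C : Matrix (Fin n) (Fin n) ℂ) :
    ∃ (y x : Fin (Cᵀ.rank) → (Fin n → ℂ)),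
      LinearIndependent ℂ x ∧ C = ∑ i, vecMulVec (y i) (x i) := by
  set R := LinearMap.range (Cᵀ.mulVecLin) with hR
  have hfin : Module.finrank ℂ R = Cᵀ.rank := rfl
  let b := Module.finBasisOfFinrankEq ℂ R hfin
  have hrow : ∀ k : Fin n, (fun j => C k j) ∈ R := by
    intro k
    refine ⟨Pi.single k 1, ?_⟩
    ext j
    simp [Matrix.mulVecLin_apply]
  refine ⟨fun i k => b.repr ⟨fun j => C k j, hrow k⟩ i, fun i => (b i : Fin n → ℂ), ?_, ?_⟩
  · exact b.linearIndependent.map' R.subtype R.ker_subtype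
  · ext k j
    have hz := b.sum_repr ⟨fun j => C k j, hrow k⟩
    have := congrArg (fun v : R => (v : Fin n → ℂ) j) hz
    simp only [AddSubmonoidClass.coe_finset_sum, SetLike.val_smul, Finset.sum_apply,
      Pi.smul_apply, smul_eq_mul] at this
    rw [Matrix.sum_apply]
    simp only [vecMulVec_apply]
    exact this.symm

/-- The key induction. -/
lemma key (L : Submodule ℂ (Matrix (Fin n) (Fin n) ℂ))
    (htrans : ∀ x : Fin n → ℂ, x ≠ 0 → ∀ y : Fin n → ℂ, ∃ A ∈ L, A.mulVec x = y) :
    ∀ (k : ℕ), 1 ≤ k → ∀ (s : ℕ) (y x : Fin s → (Fin n → ℂ)), LinearIndependent ℂ x →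
      ∀ t : Finset (Fin s), t.card ≤ k → (∀ i ∉ t, y i = 0) →
      (∀ D ∈ P L k, ((∑ i, vecMulVec (y i) (x i)) * D).trace = 0) →
      ∀ i, y i = 0 := by
  intro k hk
  induction k, hk using Nat.le_induction with
  | base =>
    intro s y x hx t ht hsupp hann i₀
    by_contra hne
    have hi₀t : i₀ ∈ t := by
      by_contra h; exact hne (hsupp i₀ h)
    have h1 : ∀ i, i ≠ i₀ → y i = 0 := by
      intro i hi
      by_contra h
      have hit : i ∈ t := by by_contra h'; exact h (hsupp i h')
      exact hi (Finset.card_le_one.mp ht i hit i₀ hi₀t)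
    have hdot : ∀ A ∈ L, x i₀ ⬝ᵥ (A *ᵥ y i₀) = 0 := by
      intro A hA
      have h0 := hann A (mem_P_one hA)
      rw [Matrix.sum_mul, Matrix.trace_sum] at h0
      rw [Finset.sum_eq_single i₀] at h0
      · rw [trace_vecMulVec_mul] at h0; exact h0
      · intro i _ hi
        rw [h1 i hi, vecMulVec_zero_left, Matrix.zero_mul, Matrix.trace_zero]
      · intro h; exact absurd (Finset.mem_univ i₀) h
    exact (hx.ne_zero i₀) (dot_eq_zero htrans hne hdot)
  | succ k hk IH =>
    intro s y x hx t ht hsupp hann i₀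
    by_cases hi₀t : i₀ ∈ t
    swap
    · exact hsupp i₀ hi₀t
    by_contra hne
    -- annihilation for A * C
    have hannA : ∀ A ∈ L, ∀ D ∈ P L k,
        ((∑ i, vecMulVec ((A *ᵥ y i)) (x i)) * D).trace = 0 := by
      intro A hA D hD
      have hAC : (∑ i, vecMulVec (A *ᵥ y i) (x i))
          = A * (∑ i, vecMulVec (y i) (x i)) := by
        rw [Matrix.mul_sum]
        exact Finset.sum_congr rfl fun i _ => (mul_vecMulVec A (y i) (x i)).symm
      rw [hAC, Matrix.mul_assoc, Matrix.trace_mul_comm, Matrix.mul_assoc]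
      exact hann (D * A) (P_mul_mem hD hA)
    have hstepA : ∀ A ∈ L, A *ᵥ y i₀ = 0 → ∀ i, A *ᵥ y i = 0 := by
      intro A hA h0
      refine IH s (fun i => A *ᵥ y i) x hx (t.erase i₀) ?_ ?_ (hannA A hA)
      · rw [Finset.card_erase_of_mem hi₀t]; omega
      · intro i hi
        rcases eq_or_ne i i₀ with rfl | hii
        · exact h0
        · have hit : i ∉ t := fun hit => hi (Finset.mem_erase.mpr ⟨hii, hit⟩)
          show A *ᵥ y i = 0
          rw [hsupp i hit, Matrix.mulVec_zero]
    by_cases hcard : t.card ≤ k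
    · refine hne (killed_eq_zero htrans fun A hA => ?_)
      exact IH s (fun i => A *ᵥ y i) x hx t hcard
        (fun i hi => show A *ᵥ y i = 0 by rw [hsupp i hi, Matrix.mulVec_zero])
        (hannA A hA) i₀
    · have hcard' : t.card = k + 1 := le_antisymm ht (not_le.mp hcard)
      obtain ⟨i₁, hi₁t, hi₁0⟩ :=
        Finset.exists_mem_ne (by omega : 1 < t.card) i₀
      -- evaluation maps
      let ev : (Fin n → ℂ) → (Matrix (Fin n) (Fin n) ℂ →ₗ[ℂ] (Fin n → ℂ)) := fun w =>
        { toFun := fun A => A *ᵥ w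
          map_add' := fun A B => Matrix.add_mulVec A B w
          map_smul' := fun c A => Matrix.smul_mulVec c A w }
      let g : L →ₗ[ℂ] (Fin n → ℂ) := (ev (y i₀)).comp L.subtype
      let f : L →ₗ[ℂ] (Fin n → ℂ) := (ev (y i₁)).comp L.subtype
      have hgsurj : LinearMap.range g = ⊤ := by
        rw [LinearMap.range_eq_top]
        intro w
        obtain ⟨A, hA, hAw⟩ := htrans (y i₀) hne w
        exact ⟨⟨A, hA⟩, hAw⟩
      obtain ⟨h, hh⟩ := g.exists_rightInverse_of_surjective hgsurj
      have hker : ∀ B : L, g B = 0 → f B = 0 := fun B hB => hstepA B B.2 hB i₁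
      set F : (Fin n → ℂ) →ₗ[ℂ] (Fin n → ℂ) := f.comp h with hFdef
      have hF : ∀ A, (hA : A ∈ L) → F (A *ᵥ y i₀) = A *ᵥ y i₁ := by
        intro A hA
        have h1 : g (h (g ⟨A, hA⟩)) = g ⟨A, hA⟩ := LinearMap.congr_fun hh (g ⟨A, hA⟩)
        have h2 : g (h (g ⟨A, hA⟩) - ⟨A, hA⟩) = 0 := by rw [map_sub, h1, sub_self]
        have h3 : f (h (g ⟨A, hA⟩) - ⟨A, hA⟩) = 0 := hker _ h2
        rw [map_sub, sub_eq_zero] at h3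
        show f (h (A *ᵥ y i₀)) = A *ᵥ y i₁
        have : A *ᵥ y i₀ = g ⟨A, hA⟩ := rfl
        rw [this, h3]
        rfl
      haveI : Nontrivial (Fin n → ℂ) := nontrivial_of_ne (y i₀) 0 hne
      obtain ⟨μ, hμ⟩ := Module.End.exists_eigenvalue F
      obtain ⟨z, hz⟩ := hμ.exists_hasEigenvector
      obtain ⟨A, hA, hAz⟩ := htrans (y i₀) hne z
      have hFz : A *ᵥ y i₁ = μ • z := by
        rw [← hF A hA, hAz]
        exact hz.apply_eq_smul
      set x' := Function.update x i₀ (x i₀ + μ • x i₁) with hx'def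
      set y' := Function.update (fun i => A *ᵥ y i) i₁ (0 : Fin n → ℂ) with hy'def
      have hx'li : LinearIndependent ℂ x' := by
        rw [Fintype.linearIndependent_iff]
        intro c hc
        have e0 : (fun j => c j • x' j)
            = Function.update (fun j => c j • x j) i₀ (c i₀ • x i₀ + (c i₀ * μ) • x i₁) := by
          funext j
          rcases eq_or_ne j i₀ with rfl | hj
          · simp [hx'def, Function.update_self, smul_add, smul_smul]
          · simp [hx'def, Function.update_of_ne hj]
        have e1 : ∑ j, c j • x' j = (c i₀ * μ) • x i₁ + ∑ j, c j • x j := by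
          rw [e0, Finset.sum_update_of_mem (Finset.mem_univ i₀)]
          rw [← Finset.add_sum_erase _ (fun j => c j • x j) (Finset.mem_univ i₀)]
          rw [Finset.sdiff_singleton_eq_erase]
          abel
        set d : Fin s → ℂ := fun j => c j + (if j = i₁ then μ * c i₀ else 0) with hd
        have hdsum : ∑ j, d j • x j = 0 := by
          have : ∑ j, d j • x j = (∑ j, c j • x j) + (μ * c i₀) • x i₁ := by
            simp only [hd, add_smul, Finset.sum_add_distrib, ite_smul, zero_smul]
            rw [Finset.sum_ite_eq' Finset.univ i₁ (fun j => (μ * c i₀) • x j)]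
            simp
          rw [this, ← hc, e1]
          rw [mul_comm μ (c i₀)]
          abel
        have hd0 := Fintype.linearIndependent_iff.mp hx d hdsum
        have hc0 : ∀ j, j ≠ i₁ → c j = 0 := by
          intro j hj
          have := hd0 j
          simpa [hd, hj] using this
        intro i
        rcases eq_or_ne i i₁ with rfl | hi
        · have := hd0 i
          have hci₀ : c i₀ = 0 := hc0 i₀ (Ne.symm hi₁0)
          simpa [hd, hci₀] using this
        · exact hc0 i hi
      -- rewrite the sum
      have hsum : (∑ i, vecMulVec (y' i) (x' i)) = ∑ i, vecMulVec (A *ᵥ y i) (x i) := by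
        have hi₁mem : i₁ ∈ Finset.univ.erase i₀ := Finset.mem_erase.mpr ⟨hi₁0, Finset.mem_univ i₁⟩
        have split : ∀ (G : Fin s → Matrix (Fin n) (Fin n) ℂ),
            ∑ i, G i = G i₀ + (G i₁ + ∑ i ∈ (Finset.univ.erase i₀).erase i₁, G i) := by
          intro G
          rw [← Finset.add_sum_erase _ G (Finset.mem_univ i₀), ← Finset.add_sum_erase _ G hi₁mem]
        rw [split, split (fun i => vecMulVec (A *ᵥ y i) (x i))]
        have hrest : ∑ i ∈ (Finset.univ.erase i₀).erase i₁, vecMulVec (y' i) (x' i)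
            = ∑ i ∈ (Finset.univ.erase i₀).erase i₁, vecMulVec (A *ᵥ y i) (x i) := by
          refine Finset.sum_congr rfl fun i hi => ?_
          have hii₁ : i ≠ i₁ := (Finset.mem_erase.mp hi).1
          have hii₀ : i ≠ i₀ := (Finset.mem_erase.mp (Finset.mem_erase.mp hi).2).1
          rw [hy'def, hx'def, Function.update_of_ne hii₁, Function.update_of_ne hii₀]
        rw [hrest]
        have hy'i₀ : y' i₀ = z := by
          rw [hy'def, Function.update_of_ne (Ne.symm hi₁0)]
          exact hAz
        have hy'i₁ : y' i₁ = 0 := by rw [hy'def, Function.update_self]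
        have hx'i₀ : x' i₀ = x i₀ + μ • x i₁ := by rw [hx'def, Function.update_self]
        have hx'i₁ : x' i₁ = x i₁ := by rw [hx'def, Function.update_of_ne hi₁0]
        rw [hy'i₀, hy'i₁, hx'i₀, hx'i₁, hAz, hFz, vecMulVec_zero_left]
        ext a b
        simp only [Matrix.add_apply, vecMulVec_apply, Pi.add_apply, Pi.smul_apply,
          smul_eq_mul, Matrix.zero_apply]
        ring
      have hall : ∀ i, y' i = 0 := by
        refine IH s y' x' hx'li (t.erase i₁) ?_ ?_ ?_
        · rw [Finset.card_erase_of_mem hi₁t]; omega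
        · intro i hi
          rcases eq_or_ne i i₁ with rfl | hii
          · rw [hy'def, Function.update_self]
          · have hit : i ∉ t := fun h' => hi (Finset.mem_erase.mpr ⟨hii, h'⟩)
            rw [hy'def, Function.update_of_ne hii]
            rw [hsupp i hit, Matrix.mulVec_zero]
        · intro D hD
          rw [hsum]
          exact hannA A hA D hD
      have : z = 0 := by
        have h0 := hall i₀
        rw [hy'def, Function.update_of_ne (Ne.symm hi₁0)] at h0
        rw [← hAz]; exact h0
      exact hz.2 this

end TransitiveProd

open TransitiveProd in
/-- If `L ⊆ M_n(ℂ)` is a transitive subspace spanned by its elements of rank at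
most `r`, then products of `r + 1` elements of `L` span `M_n(ℂ)`. -/
theorem span_pow_succ_eq_top (n r : ℕ)
    (L : Submodule ℂ (Matrix (Fin n) (Fin n) ℂ))
    (htrans : ∀ x : Fin n → ℂ, x ≠ 0 → ∀ y : Fin n → ℂ, ∃ A ∈ L, A.mulVec x = y)
    (hspan : L = Submodule.span ℂ {A : Matrix (Fin n) (Fin n) ℂ | A ∈ L ∧ A.rank ≤ r}) :
    Submodule.span ℂ {C : Matrix (Fin n) (Fin n) ℂ |
        ∃ lst : List (Matrix (Fin n) (Fin n) ℂ),
          lst.length = r + 1 ∧ (∀ A ∈ lst, A ∈ L) ∧ C = lst.prod} = ⊤ := by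
  classical
  show Submodule.span ℂ (P L (r + 1)) = ⊤
  by_cases hn : n = 0
  · subst hn
    rw [Submodule.eq_top_iff']
    intro m
    have : m = 0 := by ext i j; exact i.elim0
    rw [this]; exact Submodule.zero_mem _
  have hn1 : 0 < n := Nat.pos_of_ne_zero hn
  -- the case r = 0 is vacuous: L would be trivial, contradicting transitivity
  rcases Nat.eq_zero_or_pos r with hr | hr
  · exfalso
    have hL0 : ∀ A ∈ L, A = (0 : Matrix (Fin n) (Fin n) ℂ) := by
      intro A hA
      have hmem : A ∈ Submodule.span ℂ
          {A : Matrix (Fin n) (Fin n) ℂ | A ∈ L ∧ A.rank ≤ r} := hspan ▸ hA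
      have hsub : {A : Matrix (Fin n) (Fin n) ℂ | A ∈ L ∧ A.rank ≤ r}
          ⊆ (⊥ : Submodule ℂ (Matrix (Fin n) (Fin n) ℂ)) := by
        rintro A' ⟨_, h0⟩
        have hr0 : A'.rank = 0 := by omega
        have hrange : LinearMap.range A'.mulVecLin = ⊥ := Submodule.finrank_eq_zero.mp hr0
        have hmv : ∀ v, A' *ᵥ v = 0 := by
          intro v
          have hmem' : A' *ᵥ v ∈ LinearMap.range A'.mulVecLin := ⟨v, by
            simp [Matrix.mulVecLin_apply]⟩
          rw [hrange] at hmem'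
          exact (Submodule.mem_bot ℂ).mp hmem'
        have hA'0 : A' = 0 := by
          ext i j
          have := congrFun (hmv (Pi.single j 1)) i
          simpa using this
        rw [SetLike.mem_coe, hA'0]
        exact Submodule.zero_mem _
      have := Submodule.span_le.mpr hsub
      simpa using this hmem
    set e : Fin n → ℂ := fun _ => 1 with he_def
    have he : e ≠ 0 := by
      intro h
      have := congrFun h ⟨0, hn1⟩
      simp [he_def] at this
    obtain ⟨A, hA, hAe⟩ := htrans e he e
    rw [hL0 A hA, Matrix.zero_mulVec] at hAe
    exact he hAe.symm
  -- main case
  by_contra hW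
  have hmem : ∃ m, m ∉ Submodule.span ℂ (P L (r + 1)) := by
    by_contra h'
    push_neg at h'
    exact hW (Submodule.eq_top_iff'.mpr h')
  obtain ⟨m, hm⟩ := hmem
  set W := Submodule.span ℂ (P L (r + 1)) with hWdef
  have hq : W.mkQ m ≠ 0 := by
    rw [Submodule.mkQ_apply, Ne, Submodule.Quotient.mk_eq_zero]
    exact hm
  obtain ⟨ψ, hψ⟩ : ∃ ψ : Module.Dual ℂ (Matrix (Fin n) (Fin n) ℂ ⧸ W), ψ (W.mkQ m) ≠ 0 := by
    by_contra h'
    push_neg at h'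
    exact hq ((Module.forall_dual_apply_eq_zero_iff ℂ _).mp h')
  set φ : Module.Dual ℂ (Matrix (Fin n) (Fin n) ℂ) := ψ.comp W.mkQ with hφdef
  have hφ0 : ∀ D ∈ P L (r + 1), φ D = 0 := by
    intro D hD
    have : W.mkQ D = 0 := by
      rw [Submodule.mkQ_apply, Submodule.Quotient.mk_eq_zero]
      exact Submodule.subset_span hD
    simp [hφdef, LinearMap.comp_apply, this]
  set B : Matrix (Fin n) (Fin n) ℂ :=
    Matrix.of (fun i j => φ (Matrix.single j i 1)) with hBdef
  have hBtr : ∀ M : Matrix (Fin n) (Fin n) ℂ, (B * M).trace = φ M := by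
    intro M
    conv_rhs => rw [Matrix.matrix_eq_sum_single M]
    rw [map_sum]
    simp only [map_sum]
    have hterm : ∀ a b : Fin n, φ (Matrix.single a b (M a b)) = M a b * B b a := by
      intro a b
      have : Matrix.single a b (M a b) = M a b • Matrix.single a b 1 := by
        rw [Matrix.smul_single, smul_eq_mul, mul_one]
      rw [this, _root_.map_smul, smul_eq_mul]
      rfl
    simp only [hterm]
    simp only [Matrix.trace, Matrix.diag, Matrix.mul_apply]
    rw [Finset.sum_comm]
    exact Finset.sum_congr rfl fun a _ => Finset.sum_congr rfl fun b _ => by ring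
  have hann : ∀ D ∈ P L (r + 1), (B * D).trace = 0 := fun D hD =>
    (hBtr D).trans (hφ0 D hD)
  have hAB : ∀ A ∈ L, A * B = 0 := by
    have hS : ∀ A, A ∈ L → A.rank ≤ r → A * B = 0 := by
      intro A hA hr'
      obtain ⟨y, x, hxli, hdec⟩ := decomp (A * B)
      have hs : ((A * B)ᵀ).rank ≤ r := by
        rw [Matrix.rank_transpose]
        exact le_trans (Matrix.rank_mul_le_left A B) hr'
      have hall : ∀ i, y i = 0 := by
        refine key L htrans r hr _ y x hxli Finset.univ ?_ ?_ ?_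
        · simpa using hs
        · intro i hi; exact absurd (Finset.mem_univ i) hi
        · intro D hD
          rw [← hdec, Matrix.mul_assoc, Matrix.trace_mul_comm, Matrix.mul_assoc]
          exact hann (D * A) (P_mul_mem hD hA)
      rw [hdec]
      exact Finset.sum_eq_zero fun i _ => by rw [hall i]; exact vecMulVec_zero_left _
    intro A hA
    have hker : L ≤ LinearMap.ker (LinearMap.mulRight ℂ B) := by
      conv_lhs => rw [hspan]
      rw [Submodule.span_le]
      rintro A' ⟨hA'L, hA'r⟩
      rw [SetLike.mem_coe, LinearMap.mem_ker, LinearMap.mulRight_apply]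
      exact hS A' hA'L hA'r
    have := hker hA
    rwa [LinearMap.mem_ker, LinearMap.mulRight_apply] at this
  have hB0 : B = 0 := by
    by_contra hB
    have hex : ∃ v, B *ᵥ v ≠ 0 := by
      by_contra h'
      push_neg at h'
      apply hB
      ext i j
      have := congrFun (h' (Pi.single j 1)) i
      simpa using this
    obtain ⟨v, hv⟩ := hex
    refine hv (killed_eq_zero htrans fun A hA => ?_)
    rw [Matrix.mulVec_mulVec, hAB A hA, Matrix.zero_mulVec]
  apply hψ
  have h1 : φ m = 0 := by
    rw [← hBtr m, hB0, Matrix.zero_mul, Matrix.trace_zero]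
  simpa [hφdef] using h1
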